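/- Let C be a planar convex body that is k_C-rotationally symmetric about a point p in its interior, where k_C is a composite integer whose smallest divisor greater than 1 is at least 3. Then d_M(P_a) = d_M(P_b) for all divisors a, b > 1 of k_C (a chain of equalities among the values d_M over the divisors of k_C greater than 1) if and only if every prime number dividing k_C is greater than or equal to 7. -/

import Mathlib

open Metric Set

/-- Rotation of angle `α` about the point `p` in the plane `ℂ`. -/
noncomputable def rot (p : ℂ) (α : ℝ) : ℂ → ℂ :=
  fun z => p + Complex.exp (α * Complex.I) * (z - p)

/-- A planar convex body: a compact convex subset of the plane with nonempty interior. -/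
def IsConvexBody (C : Set ℂ) : Prop :=
  IsCompact C ∧ Convex ℝ C ∧ (interior C).Nonempty

/-- `C` is `k`-rotationally symmetric about `p`: the rotation of angle `2π/k`
about `p` maps `C` onto itself. -/
def IsRotSym (C : Set ℂ) (p : ℂ) (k : ℕ) : Prop :=
  rot p (2 * Real.pi / k) '' C = C

/-- The closed convex sector at `p` spanned by `x - p` and `ρ_k(x) - p`. -/
noncomputable def sector (p x : ℂ) (k : ℕ) : Set ℂ :=
  {z | ∃ a b : ℝ, 0 ≤ a ∧ 0 ≤ b ∧
    z = p + (a : ℂ) * (x - p) + (b : ℂ) * (rot p (2 * Real.pi / k) x - p)}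

/-- The maximum relative diameter of the standard `k`-partition of `C`
(with center `p` and endpoint `x`): the diameter of one piece `C ∩ S_k`. -/
noncomputable def dM (C : Set ℂ) (p x : ℂ) (k : ℕ) : ℝ :=
  Metric.diam (C ∩ sector p x k)

/-- The circumradius of `C` with respect to `p`: `sup_{y ∈ C} dist p y`. -/
noncomputable def circumrad (C : Set ℂ) (p : ℂ) : ℝ :=
  ⨆ y ∈ C, dist p y

/-! ### Helper lemmas -/

lemma rot_sub_eq (p : ℂ) (α : ℝ) (z : ℂ) :
    rot p α z - p = Complex.exp (α * Complex.I) * (z - p) := by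
  simp [rot]

lemma rot_rot (p : ℂ) (α β : ℝ) (z : ℂ) :
    rot p α (rot p β z) = rot p (α + β) z := by
  simp only [rot]
  rw [show ((α + β : ℝ) : ℂ) * Complex.I = (α : ℂ) * Complex.I + (β : ℂ) * Complex.I by
    push_cast; ring, Complex.exp_add]
  ring

lemma rot_mem_of_rotSym {C : Set ℂ} {p : ℂ} {kC : ℕ}
    (hsym : IsRotSym C p kC) (n : ℕ) {z : ℂ} (hz : z ∈ C) :
    rot p (n * (2 * Real.pi / kC)) z ∈ C := by
  induction n with
  | zero => simpa [rot] using hz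
  | succ n ih =>
      have h1 : rot p ((n + 1 : ℕ) * (2 * Real.pi / kC)) z
          = rot p (2 * Real.pi / kC) (rot p (n * (2 * Real.pi / kC)) z) := by
        rw [rot_rot]; congr 1; push_cast; ring
      rw [h1]
      have : rot p (2 * Real.pi / kC) '' C = C := hsym
      rw [← this]
      exact mem_image_of_mem _ ih

lemma rot_dvd_mem {C : Set ℂ} {p : ℂ} {kC : ℕ}
    (hsym : IsRotSym C p kC) (hkC : kC ≠ 0) {k : ℕ} (hk : k ∣ kC) (hk0 : k ≠ 0)
    (m : ℕ) {z : ℂ} (hz : z ∈ C) :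
    rot p (m * (2 * Real.pi / k)) z ∈ C := by
  obtain ⟨c, rfl⟩ := hk
  have hc0 : c ≠ 0 := by rintro rfl; simp at hkC
  have h := rot_mem_of_rotSym hsym (m * c) hz
  have hang : ((m * c : ℕ) : ℝ) * (2 * Real.pi / (k * c : ℕ)) = m * (2 * Real.pi / k) := by
    push_cast
    field_simp
  rwa [hang] at h

lemma center_mem_sector (p x : ℂ) (k : ℕ) : p ∈ sector p x k :=
  ⟨0, 0, le_refl _, le_refl _, by push_cast; ring⟩

lemma self_mem_sector (p x : ℂ) (k : ℕ) : x ∈ sector p x k :=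
  ⟨1, 0, zero_le_one, le_refl _, by push_cast; ring⟩

lemma rotx_mem_sector (p x : ℂ) (k : ℕ) : rot p (2 * Real.pi / k) x ∈ sector p x k :=
  ⟨0, 1, le_refl _, zero_le_one, by push_cast; ring⟩
lemma two_pi_div_lt_pi {k : ℕ} (hk : 3 ≤ k) : 2 * Real.pi / k < Real.pi := by
  have hπ := Real.pi_pos
  rw [div_lt_iff₀ (by positivity : (0:ℝ) < k)]
  have : (3:ℝ) ≤ k := by exact_mod_cast hk
  nlinarith

lemma two_pi_div_pos {k : ℕ} (hk : 1 ≤ k) : 0 < 2 * Real.pi / k := by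
  have hπ := Real.pi_pos
  have : (0:ℝ) < k := by exact_mod_cast hk
  positivity

lemma mem_sector_of_arg (p x : ℂ) {k : ℕ} (hk : 3 ≤ k) {s γ : ℝ} (hs : 0 ≤ s)
    (hγ0 : 0 ≤ γ) (hγ : γ ≤ 2 * Real.pi / k) {z : ℂ}
    (hz : z - p = (s : ℂ) * Complex.exp ((γ : ℂ) * Complex.I) * (x - p)) :
    z ∈ sector p x k := by
  set θ := 2 * Real.pi / k with hθdef
  have hθπ : θ < Real.pi := two_pi_div_lt_pi hk
  have hθ0 : 0 < θ := two_pi_div_pos (by omega)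
  have hsθ : 0 < Real.sin θ := Real.sin_pos_of_pos_of_lt_pi hθ0 hθπ
  refine ⟨s * Real.sin (θ - γ) / Real.sin θ, s * Real.sin γ / Real.sin θ, ?_, ?_, ?_⟩
  · have h1 : 0 ≤ Real.sin (θ - γ) :=
      Real.sin_nonneg_of_nonneg_of_le_pi (by linarith) (by linarith)
    positivity
  · have h1 : 0 ≤ Real.sin γ :=
      Real.sin_nonneg_of_nonneg_of_le_pi hγ0 (by linarith)
    positivity
  · have hzz : z = p + ((s : ℂ) * Complex.exp ((γ : ℂ) * Complex.I)) * (x - p) := by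
      rw [← hz]; ring
    rw [hzz, rot_sub_eq]
    have key : (s : ℂ) * Complex.exp ((γ : ℂ) * Complex.I)
        = ((s * Real.sin (θ - γ) / Real.sin θ : ℝ) : ℂ)
          + ((s * Real.sin γ / Real.sin θ : ℝ) : ℂ) * Complex.exp ((θ : ℂ) * Complex.I) := by
      apply Complex.ext
      · simp only [Complex.mul_re, Complex.ofReal_re, Complex.ofReal_im, Complex.add_re,
          Complex.mul_im]
        rw [show ((γ:ℂ) * Complex.I) = ((γ:ℝ) : ℂ) * Complex.I by norm_cast,
          show ((θ:ℂ) * Complex.I) = ((θ:ℝ) : ℂ) * Complex.I by norm_cast,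
          Complex.exp_ofReal_mul_I_re, Complex.exp_ofReal_mul_I_im,
          Complex.exp_ofReal_mul_I_re, Complex.exp_ofReal_mul_I_im]
        rw [Real.sin_sub]
        field_simp
        ring
      · simp only [Complex.mul_im, Complex.ofReal_re, Complex.ofReal_im, Complex.add_im,
          Complex.mul_re]
        rw [show ((γ:ℂ) * Complex.I) = ((γ:ℝ) : ℂ) * Complex.I by norm_cast,
          show ((θ:ℂ) * Complex.I) = ((θ:ℝ) : ℂ) * Complex.I by norm_cast,
          Complex.exp_ofReal_mul_I_re, Complex.exp_ofReal_mul_I_im,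
          Complex.exp_ofReal_mul_I_re, Complex.exp_ofReal_mul_I_im]
        field_simp
        ring
      
    rw [key]
    ring
lemma ball_infDist_subset {C : Set ℂ} {p : ℂ} (hclosed : IsClosed C) (hpC : p ∈ C) :
    ball p (infDist p (frontier C)) ⊆ C := by
  intro y hy
  by_contra hyC
  set r := infDist p (frontier C) with hrdef
  have hy' : dist p y < r := by rwa [mem_ball, dist_comm] at hy
  set γ : ℝ → ℂ := fun t => p + (t : ℂ) * (y - p) with hγ
  have hcont : Continuous γ := by
    apply continuous_const.add
    exact (Complex.continuous_ofReal.mul continuous_const)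
  set T : Set ℝ := Icc (0:ℝ) 1 ∩ γ ⁻¹' C with hT
  have hT0 : (0:ℝ) ∈ T := ⟨⟨le_refl _, zero_le_one⟩, by simp [hγ, hpC]⟩
  have hTne : T.Nonempty := ⟨0, hT0⟩
  have hTb : BddAbove T := BddAbove.mono (inter_subset_left) bddAbove_Icc
  have hTc : IsClosed T := isClosed_Icc.inter (hclosed.preimage hcont)
  set t₀ := sSup T with ht₀def
  have ht₀T : t₀ ∈ T := hTc.csSup_mem hTne hTb
  have ht₀ub : ∀ t ∈ T, t ≤ t₀ := fun t ht => le_csSup hTb ht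
  have ht₀1 : t₀ ≠ 1 := by
    intro h
    apply hyC
    have := ht₀T.2
    rw [h] at this
    simpa [hγ] using this
  have ht₀lt : t₀ < 1 := lt_of_le_of_ne ht₀T.1.2 ht₀1
  have ht₀0 : 0 ≤ t₀ := ht₀T.1.1
  -- γ t₀ is in the frontier of C
  have hfr : γ t₀ ∈ frontier C := by
    rw [frontier_eq_closure_inter_closure]
    constructor
    · exact subset_closure ht₀T.2
    · -- approximate from outside
      have hseq : Filter.Tendsto (fun n : ℕ => γ (t₀ + (1 - t₀) / (n + 2)))
          Filter.atTop (nhds (γ t₀)) := by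
        apply (hcont.tendsto t₀).comp
        have h2 : Filter.Tendsto (fun n : ℕ => (1 - t₀) / (n + 2)) Filter.atTop (nhds 0) := by
          apply Filter.Tendsto.div_atTop (tendsto_const_nhds)
          exact Filter.tendsto_atTop_add_const_right _ 2 tendsto_natCast_atTop_atTop
        have := h2.const_add t₀
        simpa using this
      apply mem_closure_of_tendsto hseq
      filter_upwards with n
      intro hmem
      have hn2 : (0:ℝ) < (n:ℝ) + 2 := by positivity
      have hpos : 0 < (1 - t₀) / ((n:ℝ) + 2) := div_pos (by linarith) hn2
      have hle : t₀ + (1 - t₀) / (n + 2) ≤ 1 := by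
        have h2 : (1 - t₀) / (n + 2) ≤ (1 - t₀) / 2 := by
          apply div_le_div_of_nonneg_left (by linarith) (by norm_num)
          have : (0:ℝ) ≤ (n:ℝ) := Nat.cast_nonneg n
          linarith
        linarith
      have : t₀ + (1 - t₀) / (n + 2) ∈ T := ⟨⟨by linarith, hle⟩, hmem⟩
      have := ht₀ub _ this
      linarith
  have h1 : r ≤ dist p (γ t₀) := infDist_le_dist_of_mem hfr
  have h2 : dist p (γ t₀) ≤ dist p y := by
    have : dist p (γ t₀) = t₀ * dist p y := by
      rw [Complex.dist_eq, Complex.dist_eq]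
      have : p - γ t₀ = -((t₀ : ℂ) * (y - p)) := by simp only [hγ]; ring
      rw [this, norm_neg, norm_mul, Complex.norm_real, Real.norm_eq_abs, abs_of_nonneg ht₀0]
      congr 1
      exact norm_sub_rev y p
    rw [this]
    nlinarith [dist_nonneg (x := p) (y := y)]
  linarith

lemma closedBall_infDist_subset {C : Set ℂ} {p : ℂ} (hclosed : IsClosed C) (hpC : p ∈ C)
    (hr : 0 < infDist p (frontier C)) :
    closedBall p (infDist p (frontier C)) ⊆ C := by
  rw [← closure_ball p hr.ne']
  have := closure_mono (ball_infDist_subset hclosed hpC)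
  rwa [hclosed.closure_eq] at this
lemma normSq_sub' (u v : ℂ) :
    Complex.normSq (u - v)
      = Complex.normSq u + Complex.normSq v - 2 * (u * (starRingEnd ℂ) v).re := by
  simp only [Complex.normSq_apply, Complex.sub_re, Complex.sub_im, Complex.mul_re,
    Complex.conj_re, Complex.conj_im]
  ring

lemma not_mem_interior_of_frontier {C : Set ℂ} {x : ℂ} (hx : x ∈ frontier C) :
    x ∉ interior C := by
  rw [← closure_diff_interior] at hx
  exact hx.2

/-- The tangent line to the inscribed circle at the touching point `x` supports `C`. -/
lemma support_at_x {C : Set ℂ} {p x : ℂ} (hC : IsConvexBody C) (hp : p ∈ interior C)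
    (hx : x ∈ frontier C) (hxr : dist p x = infDist p (frontier C)) {z : ℂ} (hz : z ∈ C) :
    ((z - p) * (starRingEnd ℂ) (x - p)).re ≤ dist p x ^ 2 := by
  by_contra hcon
  push_neg at hcon
  set r := dist p x with hrdef
  have hclosed : IsClosed C := hC.1.isClosed
  have hxint : x ∉ interior C := not_mem_interior_of_frontier hx
  have hpx : p ≠ x := by rintro rfl; exact hxint hp
  have hr0 : 0 < r := dist_pos.2 hpx
  set K : ℝ := ((z - p) * (starRingEnd ℂ) (x - p)).re with hKdef
  set Nz : ℝ := Complex.normSq (z - p) with hNzdef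
  set D : ℝ := K - r ^ 2 with hDdef
  have hD0 : 0 < D := by simp only [hDdef]; linarith
  set M : ℝ := |Nz - r ^ 2| with hMdef
  have hM0 : 0 ≤ M := abs_nonneg _
  set t : ℝ := min (1/2) (D / (M + 1)) with htdef
  have ht0 : 0 < t := lt_min (by norm_num) (div_pos hD0 (by linarith))
  have ht1 : t < 1 := lt_of_le_of_lt (min_le_left _ _) (by norm_num)
  have hkey : t * (Nz - r ^ 2) < 2 * D := by
    have h1 : t * (Nz - r ^ 2) ≤ t * M := by
      apply mul_le_mul_of_nonneg_left (le_abs_self _) ht0.le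
    have h2 : t * M ≤ (D / (M + 1)) * M :=
      mul_le_mul_of_nonneg_right (min_le_right _ _) hM0
    have h3 : (D / (M + 1)) * M < 2 * D := by
      rw [div_mul_eq_mul_div, div_lt_iff₀ (by linarith : (0:ℝ) < M + 1)]
      nlinarith
    linarith
  -- the point x is in the interior of C : contradiction
  apply hxint
  -- distance from x to the shifted ball center
  have hrsq : Complex.normSq (x - p) = r ^ 2 := by
    rw [hrdef, Complex.dist_eq, ← norm_sub_rev x p]
    exact (Complex.sq_norm _).symm
  have hdsq : Complex.normSq (x - p - (t : ℂ) * (z - p))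
      = r ^ 2 - 2 * t * K + t ^ 2 * Nz := by
    rw [show Complex.normSq (x - p - (t : ℂ) * (z - p))
        = Complex.normSq (x - p) + Complex.normSq ((t:ℂ) * (z-p))
          - 2 * ((x - p) * (starRingEnd ℂ) ((t:ℂ) * (z - p))).re from normSq_sub' _ _]
    rw [hrsq]
    have h4 : Complex.normSq ((t:ℂ) * (z - p)) = t ^ 2 * Nz := by
      rw [Complex.normSq_mul, Complex.normSq_ofReal]; ring
    have h5 : ((x - p) * (starRingEnd ℂ) ((t:ℂ) * (z - p))).re = t * K := by
      rw [map_mul]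
      have : (starRingEnd ℂ) ((t:ℂ)) = (t:ℂ) := Complex.conj_ofReal t
      rw [this]
      rw [hKdef]
      simp only [Complex.mul_re, Complex.mul_im, Complex.conj_re, Complex.conj_im,
        Complex.sub_re, Complex.sub_im, Complex.ofReal_re, Complex.ofReal_im]
      ring
    rw [h4, h5]
    ring
  have hdlt : Complex.normSq (x - p - (t : ℂ) * (z - p)) < ((1 - t) * r) ^ 2 := by
    rw [hdsq]
    nlinarith [hkey, ht0]
  set d : ℝ := ‖x - p - (t : ℂ) * (z - p)‖ with hddef
  have hd_lt : d < (1 - t) * r := by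
    have h0 : 0 ≤ (1 - t) * r := by nlinarith
    refine lt_of_pow_lt_pow_left₀ 2 h0 ?_
    rw [hddef, Complex.sq_norm]
    exact hdlt
  set ε : ℝ := (1 - t) * r - d with hεdef
  have hε0 : 0 < ε := by simp only [hεdef]; linarith
  have hball : ball x ε ⊆ C := by
    intro w hw
    have hwx : ‖w - x‖ < ε := by
      rw [mem_ball, Complex.dist_eq] at hw; exact hw
    set w' : ℂ := p + ((1 - t : ℝ) : ℂ)⁻¹ * (w - p - (t : ℂ) * (z - p)) with hw'def
    have h1t : ((1 - t : ℝ) : ℂ) ≠ 0 := by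
      simp only [ne_eq, Complex.ofReal_eq_zero]
      linarith
    have hw'ball : w' ∈ ball p r := by
      rw [mem_ball, Complex.dist_eq]
      have : w' - p = ((1 - t : ℝ) : ℂ)⁻¹ * ((w - x) + (x - p - (t : ℂ) * (z - p))) := by
        rw [hw'def]; ring
      rw [this, norm_mul]
      have habs : ‖((1 - t : ℝ) : ℂ)⁻¹‖ = (1 - t)⁻¹ := by
        rw [norm_inv, Complex.norm_real, Real.norm_eq_abs, abs_of_pos (by linarith)]
      rw [habs]
      have h6 : ‖(w - x) + (x - p - (t : ℂ) * (z - p))‖ < (1 - t) * r := by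
        calc ‖(w - x) + (x - p - (t : ℂ) * (z - p))‖
            ≤ ‖w - x‖ + d := norm_add_le _ _
          _ < ε + d := by linarith
          _ = (1 - t) * r := by rw [hεdef]; ring
      have h7 : (0:ℝ) < (1 - t) := by linarith
      calc (1 - t)⁻¹ * ‖(w - x) + (x - p - (t : ℂ) * (z - p))‖
          < (1 - t)⁻¹ * ((1 - t) * r) := by
            apply mul_lt_mul_of_pos_left h6 (by positivity)
        _ = r := by field_simp
    have hw'C : w' ∈ C := by
      apply ball_infDist_subset hclosed (interior_subset hp)
      rwa [← hxr]
    have hwcomb : w = (1 - t) • w' + t • z := by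
      rw [hw'def, Complex.real_smul, Complex.real_smul]
      rw [mul_add, ← mul_assoc, mul_inv_cancel₀ h1t, one_mul]
      push_cast
      ring
    rw [hwcomb]
    exact hC.2.1 hw'C hz (by linarith) ht0.le (by ring)
  exact interior_maximal hball isOpen_ball (mem_ball_self hε0)
lemma support_rot {C : Set ℂ} {p x : ℂ} {kC : ℕ} (hC : IsConvexBody C)
    (hk2 : 2 ≤ kC) (hsym : IsRotSym C p kC) (hp : p ∈ interior C)
    (hx : x ∈ frontier C) (hxr : dist p x = infDist p (frontier C)) {z : ℂ} (hz : z ∈ C)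
    {j : ℕ} (hj : j ≤ kC) :
    ((z - p) * Complex.exp (-((j * (2 * Real.pi / kC) : ℝ) : ℂ) * Complex.I)
      * (starRingEnd ℂ) (x - p)).re ≤ dist p x ^ 2 := by
  set θ : ℝ := 2 * Real.pi / kC with hθdef
  have hkC0 : (0:ℝ) < (kC:ℝ) := by positivity
  set z' : ℂ := rot p (((kC - j : ℕ) : ℝ) * θ) z with hz'def
  have hz'C : z' ∈ C := rot_mem_of_rotSym hsym (kC - j) hz
  have hsupp := support_at_x hC hp hx hxr hz'C
  have hkθ' : (kC : ℝ) * θ = 2 * Real.pi := by rw [hθdef]; field_simp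
  have hreal : ((kC - j : ℕ) : ℝ) * θ = 2 * Real.pi - (j * θ) := by
    rw [Nat.cast_sub hj, sub_mul, hkθ']
  have hangle : Complex.exp (((((kC - j : ℕ) : ℝ) * θ : ℝ) : ℂ) * Complex.I)
      = Complex.exp (-((j * θ : ℝ) : ℂ) * Complex.I) := by
    rw [hreal]
    rw [show ((2 * Real.pi - (j * θ) : ℝ) : ℂ) * Complex.I
        = 2 * Real.pi * Complex.I + (-(((j : ℝ) * θ : ℝ) : ℂ) * Complex.I) by push_cast; ring]
    rw [Complex.exp_add, Complex.exp_two_pi_mul_I, one_mul]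
  have hz'p : z' - p = Complex.exp (-((j * θ : ℝ) : ℂ) * Complex.I) * (z - p) := by
    rw [hz'def, rot_sub_eq, hangle]
  calc ((z - p) * Complex.exp (-((j * θ : ℝ) : ℂ) * Complex.I)
        * (starRingEnd ℂ) (x - p)).re
      = ((z' - p) * (starRingEnd ℂ) (x - p)).re := by rw [hz'p]; ring_nf
    _ ≤ dist p x ^ 2 := hsupp

lemma abs_le_circ {C : Set ℂ} {p x : ℂ} {kC : ℕ} (hC : IsConvexBody C)
    (hk2 : 2 ≤ kC) (hsym : IsRotSym C p kC) (hp : p ∈ interior C)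
    (hx : x ∈ frontier C) (hxr : dist p x = infDist p (frontier C)) {z : ℂ} (hz : z ∈ C) :
    ‖z - p‖ * Real.cos (Real.pi / kC) ≤ dist p x := by
  set r := dist p x with hrdef
  have hxint : x ∉ interior C := not_mem_interior_of_frontier hx
  have hpx : p ≠ x := by rintro rfl; exact hxint hp
  have hr0 : 0 < r := dist_pos.2 hpx
  have hkC0 : (0:ℝ) < (kC:ℝ) := by positivity
  have hπ := Real.pi_pos
  set θ : ℝ := 2 * Real.pi / kC with hθdef
  have hθ0 : 0 < θ := by positivity
  have hcosθ : Real.cos (Real.pi / kC) ≤ 1 := Real.cos_le_one _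
  by_cases hzp : z = p
  · rw [hzp]
    simp only [sub_self, norm_zero, zero_mul]
    exact hr0.le
  set v : ℂ := (z - p) * (starRingEnd ℂ) (x - p) with hvdef
  have hxp : x - p ≠ 0 := sub_ne_zero.2 (Ne.symm hpx)
  have hzp' : z - p ≠ 0 := sub_ne_zero.2 hzp
  have hv0 : v ≠ 0 := mul_ne_zero hzp' (by rwa [ne_eq, starRingEnd_apply, star_eq_zero])
  have habsv : ‖v‖ = ‖z - p‖ * r := by
    rw [hvdef, norm_mul, Complex.norm_conj, hrdef, Complex.dist_eq, norm_sub_rev x p]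
  set φ : ℝ := Complex.arg v with hφdef
  set φ' : ℝ := if φ < 0 then φ + 2 * Real.pi else φ with hφ'def
  have hφ'0 : 0 ≤ φ' := by
    rw [hφ'def]
    split_ifs with h
    · have := Complex.neg_pi_lt_arg v; rw [← hφdef] at this; linarith
    · linarith [not_lt.1 h]
  have hφ'lt : φ' < 2 * Real.pi := by
    rw [hφ'def]
    split_ifs with h
    · linarith
    · have := Complex.arg_le_pi v; rw [← hφdef] at this; linarith
  have hexpφ' : ((‖v‖ : ℝ) : ℂ) * Complex.exp ((φ' : ℂ) * Complex.I) = v := by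
    rw [hφ'def]
    split_ifs with h
    · rw [show ((φ + 2 * Real.pi : ℝ) : ℂ) * Complex.I
          = (φ : ℂ) * Complex.I + 2 * Real.pi * Complex.I by push_cast; ring]
      rw [Complex.exp_add, Complex.exp_two_pi_mul_I, mul_one]
      exact Complex.norm_mul_exp_arg_mul_I v
    · exact Complex.norm_mul_exp_arg_mul_I v
  -- choose the nearest multiple of θ
  set j : ℕ := ⌊φ' / θ + 1 / 2⌋₊ with hjdef
  have hjle : (j : ℝ) ≤ φ' / θ + 1 / 2 := Nat.floor_le (by positivity)
  have hjgt : φ' / θ + 1 / 2 < (j : ℝ) + 1 := Nat.lt_floor_add_one _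
  have hφθ : φ' / θ * θ = φ' := div_mul_cancel₀ _ hθ0.ne'
  have hdiff : |φ' - j * θ| ≤ θ / 2 := by
    rw [abs_le]
    constructor <;>
      nlinarith [mul_le_mul_of_nonneg_right hjle hθ0.le,
        mul_lt_mul_of_pos_right hjgt hθ0, hφθ]
  have hkθ : (kC : ℝ) * θ = 2 * Real.pi := by rw [hθdef]; field_simp
  have hjkC : j ≤ kC := by
    have h1 : φ' / θ < kC := by
      rw [div_lt_iff₀ hθ0]
      linarith
    have h2 : (j : ℝ) < (kC : ℝ) + 1 := by linarith
    exact_mod_cast Nat.lt_add_one_iff.1 (by exact_mod_cast h2)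
  have hsupp := support_rot hC hk2 hsym hp hx hxr hz hjkC
  -- rewrite the support inequality
  have hcomp : (z - p) * Complex.exp (-(((j : ℝ) * θ : ℝ) : ℂ) * Complex.I)
      * (starRingEnd ℂ) (x - p)
      = ((‖v‖ : ℝ) : ℂ) * Complex.exp (((φ' - j * θ : ℝ) : ℂ) * Complex.I) := by
    rw [show (((φ' - j * θ : ℝ)) : ℂ) * Complex.I
        = (φ' : ℂ) * Complex.I + (-(((j : ℝ) * θ : ℝ) : ℂ) * Complex.I) by push_cast; ring]
    rw [Complex.exp_add, ← mul_assoc, hexpφ', hvdef]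
    push_cast
    ring
  rw [hcomp] at hsupp
  have hre : (((‖v‖ : ℝ) : ℂ) * Complex.exp (((φ' - j * θ : ℝ) : ℂ) * Complex.I)).re
      = ‖v‖ * Real.cos (φ' - j * θ) := by
    simp only [Complex.mul_re, Complex.ofReal_re, Complex.ofReal_im,
      Complex.exp_ofReal_mul_I_re, Complex.exp_ofReal_mul_I_im]
    ring
  have hcos : Real.cos (Real.pi / kC) ≤ Real.cos (φ' - j * θ) := by
    rw [← Real.cos_abs (φ' - j * θ)]
    have hθ2 : θ / 2 = Real.pi / kC := by rw [hθdef]; ring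
    apply Real.cos_le_cos_of_nonneg_of_le_pi (abs_nonneg _)
    · exact div_le_self hπ.le (by exact_mod_cast (by omega : 1 ≤ kC))
    · rw [← hθ2]; exact hdiff
  have h2 : ‖v‖ * Real.cos (Real.pi / kC) ≤ r ^ 2 := by
    calc ‖v‖ * Real.cos (Real.pi / kC)
        ≤ ‖v‖ * Real.cos (φ' - j * θ) :=
          mul_le_mul_of_nonneg_left hcos (norm_nonneg _)
      _ ≤ r ^ 2 := by rw [← hre]; exact hsupp
  rw [habsv] at h2
  nlinarith [h2, hr0, norm_nonneg (z - p)]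
lemma re_coe_mul_exp (a b : ℝ) :
    ((a : ℂ) * Complex.exp ((b : ℂ) * Complex.I)).re = a * Real.cos b := by
  simp only [Complex.mul_re, Complex.ofReal_re, Complex.ofReal_im,
    Complex.exp_ofReal_mul_I_re, Complex.exp_ofReal_mul_I_im]
  ring

/-- The farthest point can be rotated into the sector: lower bound `R ≤ d_M`. -/
lemma dist_le_dM {C : Set ℂ} {p x : ℂ} {kC : ℕ} (hC : IsConvexBody C)
    (hsym : IsRotSym C p kC) (hkC0 : kC ≠ 0) {k : ℕ} (hk : k ∣ kC) (hk3 : 3 ≤ k)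
    (hpC : p ∈ C) (hxp : x ≠ p) {y0 : ℂ} (hy0 : y0 ∈ C) :
    dist p y0 ≤ dM C p x k := by
  have hbdd : Bornology.IsBounded (C ∩ sector p x k) :=
    hC.1.isBounded.subset inter_subset_left
  have hk0 : k ≠ 0 := by omega
  have hkR : (0:ℝ) < (k:ℝ) := by positivity
  have hπ := Real.pi_pos
  set θ : ℝ := 2 * Real.pi / k with hθdef
  have hθ0 : 0 < θ := by positivity
  have hkθ : (k : ℝ) * θ = 2 * Real.pi := by rw [hθdef]; field_simp
  by_cases hy0p : y0 = p
  · rw [hy0p, dist_self]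
    exact Metric.diam_nonneg
  set u : ℂ := (y0 - p) / (x - p) with hudef
  have hxp' : x - p ≠ 0 := sub_ne_zero.2 hxp
  have hy0p' : y0 - p ≠ 0 := sub_ne_zero.2 hy0p
  have hu0 : u ≠ 0 := div_ne_zero hy0p' hxp'
  set φ : ℝ := Complex.arg u with hφdef
  set φ' : ℝ := if φ < 0 then φ + 2 * Real.pi else φ with hφ'def
  have hφ'0 : 0 ≤ φ' := by
    rw [hφ'def]; split_ifs with h
    · have := Complex.neg_pi_lt_arg u; linarith
    · linarith [not_lt.1 h]
  have hφ'lt : φ' < 2 * Real.pi := by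
    rw [hφ'def]; split_ifs with h
    · linarith
    · have := Complex.arg_le_pi u; linarith
  have hexpφ' : ((‖u‖ : ℝ) : ℂ) * Complex.exp ((φ' : ℂ) * Complex.I) = u := by
    rw [hφ'def]; split_ifs with h
    · rw [show ((φ + 2 * Real.pi : ℝ) : ℂ) * Complex.I
          = (φ : ℂ) * Complex.I + 2 * Real.pi * Complex.I by push_cast; ring]
      rw [Complex.exp_add, Complex.exp_two_pi_mul_I, mul_one]
      exact Complex.norm_mul_exp_arg_mul_I u
    · exact Complex.norm_mul_exp_arg_mul_I u
  set j : ℕ := ⌊φ' / θ⌋₊ with hjdef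
  have hjle : (j : ℝ) ≤ φ' / θ := Nat.floor_le (by positivity)
  have hjgt : φ' / θ < (j : ℝ) + 1 := Nat.lt_floor_add_one _
  have hφθ : φ' / θ * θ = φ' := div_mul_cancel₀ _ hθ0.ne'
  set γ : ℝ := φ' - j * θ with hγdef
  have hγ0 : 0 ≤ γ := by
    rw [hγdef]
    nlinarith [mul_le_mul_of_nonneg_right hjle hθ0.le]
  have hγθ : γ ≤ θ := by
    rw [hγdef]
    nlinarith [mul_lt_mul_of_pos_right hjgt hθ0]
  have hjk : j < k := by
    have h1 : φ' / θ < (k : ℝ) := by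
      rw [div_lt_iff₀ hθ0]; linarith
    exact_mod_cast Nat.cast_lt.1 (lt_of_le_of_lt hjle h1)
  set z : ℂ := rot p (((k - j : ℕ) : ℝ) * θ) y0 with hzdef
  have hzC : z ∈ C := by
    have := rot_dvd_mem hsym hkC0 hk hk0 (k - j) hy0
    rwa [← hθdef] at this
  have hreal : ((k - j : ℕ) : ℝ) * θ = 2 * Real.pi - (j * θ) := by
    rw [Nat.cast_sub hjk.le, sub_mul, hkθ]
  have hyu : y0 - p = u * (x - p) := by
    rw [hudef, div_mul_cancel₀ _ hxp']
  have key : Complex.exp (-(((j:ℝ) * θ : ℝ) : ℂ) * Complex.I) * u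
      = ((‖u‖ : ℝ) : ℂ) * Complex.exp ((γ : ℂ) * Complex.I) := by
    conv_lhs => rw [← hexpφ']
    rw [show ((γ : ℝ) : ℂ) * Complex.I
        = ((φ' : ℝ) : ℂ) * Complex.I + (-(((j:ℝ) * θ : ℝ) : ℂ) * Complex.I) by
      rw [hγdef]; push_cast; ring]
    rw [Complex.exp_add]
    ring
  have hzsub : z - p = ((‖u‖ : ℝ) : ℂ) * Complex.exp ((γ : ℂ) * Complex.I)
      * (x - p) := by
    rw [hzdef, rot_sub_eq, hyu]
    rw [show ((((k - j : ℕ) : ℝ) * θ : ℝ) : ℂ) * Complex.I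
        = 2 * Real.pi * Complex.I + (-(((j:ℝ) * θ : ℝ) : ℂ) * Complex.I) by
      rw [hreal]; push_cast; ring]
    rw [Complex.exp_add, Complex.exp_two_pi_mul_I, one_mul, ← mul_assoc, key]
  have hzsec : z ∈ sector p x k := by
    apply mem_sector_of_arg p x hk3 (norm_nonneg u) hγ0 (by rw [← hθdef]; exact hγθ)
    exact hzsub
  have hdist : dist p z = dist p y0 := by
    have hyu : y0 - p = u * (x - p) := by rw [hudef, div_mul_cancel₀ _ hxp']
    rw [Complex.dist_eq, Complex.dist_eq, norm_sub_rev p z, norm_sub_rev p y0,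
      hzsub, hyu]
    rw [norm_mul, norm_mul, norm_mul, Complex.norm_real, Real.norm_eq_abs, Complex.norm_exp_ofReal_mul_I,
      abs_of_nonneg (norm_nonneg u)]
    ring
  rw [← hdist]
  exact dist_le_diam_of_mem hbdd ⟨hpC, center_mem_sector p x k⟩ ⟨hzC, hzsec⟩
set_option maxHeartbeats 1000000 in
/-- Upper bound: for `k ≥ 6` the piece has diameter at most the circumradius. -/
lemma dM_le_R {C : Set ℂ} {p x : ℂ} (hC : IsConvexBody C) {k : ℕ} (hk6 : 6 ≤ k)
    {R : ℝ} (hR0 : 0 ≤ R) (hR : ∀ y ∈ C, dist p y ≤ R) :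
    dM C p x k ≤ R := by
  have hπ := Real.pi_pos
  have hkR : (0:ℝ) < (k:ℝ) := by positivity
  set θ : ℝ := 2 * Real.pi / k with hθdef
  have hθ0 : 0 < θ := by positivity
  have hθ3 : θ ≤ Real.pi / 3 := by
    rw [hθdef, div_le_div_iff₀ hkR (by norm_num)]
    have h6 : (6:ℝ) ≤ (k:ℝ) := by exact_mod_cast hk6
    nlinarith
  have hcos : (2⁻¹ : ℝ) ≤ Real.cos θ := by
    have h := Real.cos_le_cos_of_nonneg_of_le_pi hθ0.le (by linarith) hθ3
    rw [Real.cos_pi_div_three] at h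
    linarith
  have hcos1 : Real.cos θ ≤ 1 := Real.cos_le_one θ
  apply Metric.diam_le_of_forall_dist_le hR0
  rintro z ⟨hzC, a, b, ha, hb, hzeq⟩ w ⟨hwC, c, d, hc, hd, hweq⟩
  rw [← hθdef] at hzeq hweq
  set E : ℂ := Complex.exp ((θ : ℂ) * Complex.I) with hEdef
  have hrotx : rot p θ x - p = E * (x - p) := rot_sub_eq p θ x
  have hu : z - p = ((a:ℂ) + (b:ℂ) * E) * (x - p) := by
    rw [hzeq]
    rw [show p + (a:ℂ) * (x - p) + (b:ℂ) * (rot p θ x - p) - p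
        = (a:ℂ) * (x - p) + (b:ℂ) * (rot p θ x - p) by ring, hrotx]
    ring
  have hv : w - p = ((c:ℂ) + (d:ℂ) * E) * (x - p) := by
    rw [hweq]
    rw [show p + (c:ℂ) * (x - p) + (d:ℂ) * (rot p θ x - p) - p
        = (c:ℂ) * (x - p) + (d:ℂ) * (rot p θ x - p) by ring, hrotx]
    ring
  have hA : ‖z - p‖ ≤ R := by
    have := hR z hzC
    rwa [Complex.dist_eq, norm_sub_rev] at this
  have hB : ‖w - p‖ ≤ R := by
    have := hR w hwC
    rwa [Complex.dist_eq, norm_sub_rev] at this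
  have habsE : ‖E‖ = 1 := Complex.norm_exp_ofReal_mul_I θ
  have hax : ‖z - p‖ ≤ (a + b) * ‖x - p‖ := by
    rw [hu, norm_mul]
    apply mul_le_mul_of_nonneg_right _ (norm_nonneg _)
    calc ‖(a:ℂ) + (b:ℂ) * E‖
        ≤ ‖(a:ℂ)‖ + ‖(b:ℂ) * E‖ := norm_add_le _ _
      _ = a + b := by
          rw [norm_mul, habsE, Complex.norm_real, Real.norm_eq_abs, Complex.norm_real, Real.norm_eq_abs,
            abs_of_nonneg ha, abs_of_nonneg hb, mul_one]
  have hbx : ‖w - p‖ ≤ (c + d) * ‖x - p‖ := by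
    rw [hv, norm_mul]
    apply mul_le_mul_of_nonneg_right _ (norm_nonneg _)
    calc ‖(c:ℂ) + (d:ℂ) * E‖
        ≤ ‖(c:ℂ)‖ + ‖(d:ℂ) * E‖ := norm_add_le _ _
      _ = c + d := by
          rw [norm_mul, habsE, Complex.norm_real, Real.norm_eq_abs, Complex.norm_real, Real.norm_eq_abs,
            abs_of_nonneg hc, abs_of_nonneg hd, mul_one]
  set N : ℝ := Complex.normSq (x - p) with hNdef
  have hN0 : 0 ≤ N := Complex.normSq_nonneg _
  have hNabs : N = ‖x - p‖ ^ 2 := (Complex.sq_norm _).symm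
  have hEre : E.re = Real.cos θ := Complex.exp_ofReal_mul_I_re θ
  have hEim : E.im = Real.sin θ := Complex.exp_ofReal_mul_I_im θ
  have hpyth := Real.sin_sq_add_cos_sq θ
  have hre : ((z - p) * (starRingEnd ℂ) (w - p)).re
      = (a*c + b*d + (a*d + b*c) * Real.cos θ) * N := by
    rw [hu, hv]
    simp only [map_mul, map_add, Complex.conj_ofReal, Complex.mul_re, Complex.mul_im,
      Complex.add_re, Complex.add_im, Complex.ofReal_re, Complex.ofReal_im,
      Complex.conj_re, Complex.conj_im, Complex.normSq_apply, hNdef, hEre, hEim]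
    linear_combination (b * d * ((x - p).re ^ 2 + (x - p).im ^ 2)) * hpyth
  have hAB : ‖z - p‖ * ‖w - p‖ ≤ ((a+b)*(c+d)) * N := by
    have h := mul_le_mul hax hbx (norm_nonneg _)
      (mul_nonneg (by linarith) (norm_nonneg _))
    calc ‖z - p‖ * ‖w - p‖
        ≤ ((a + b) * ‖x - p‖) * ((c + d) * ‖x - p‖) := h
      _ = ((a+b)*(c+d)) * N := by rw [hNabs]; ring
  have hre_ge : (2⁻¹ : ℝ) * (‖z - p‖ * ‖w - p‖)
      ≤ ((z - p) * (starRingEnd ℂ) (w - p)).re := by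
    rw [hre]
    have t1 : 0 ≤ (a*d + b*c) * N * (Real.cos θ - 2⁻¹) :=
      mul_nonneg (mul_nonneg (by nlinarith) hN0) (by linarith)
    have t2 : 0 ≤ (a*c + b*d) * N := mul_nonneg (by nlinarith) hN0
    nlinarith [hAB]
  have hd2 : dist z w ^ 2 ≤ R ^ 2 := by
    rw [Complex.dist_eq, Complex.sq_norm, show z - w = (z - p) - (w - p) by ring,
      normSq_sub']
    have h1 : Complex.normSq (z - p) = ‖z - p‖ ^ 2 := (Complex.sq_norm _).symm
    have h2 : Complex.normSq (w - p) = ‖w - p‖ ^ 2 := (Complex.sq_norm _).symm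
    rw [h1, h2]
    nlinarith [hre_ge, hA, hB, norm_nonneg (z - p), norm_nonneg (w - p),
      mul_nonneg (sub_nonneg.2 hA) (sub_nonneg.2 hB)]
  exact le_of_pow_le_pow_left₀ (by norm_num) hR0 hd2

/-- Lower bound for small `k`: the chord between `x` and its rotate. -/
lemma chord_le_dM {C : Set ℂ} {p x : ℂ} {kC : ℕ} (hC : IsConvexBody C)
    (hsym : IsRotSym C p kC) (hkC0 : kC ≠ 0) {q : ℕ} (hq : q ∣ kC) (hq3 : 3 ≤ q)
    (hxC : x ∈ C) :
    2 * dist p x * Real.sin (Real.pi / q) ≤ dM C p x q := by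
  have hπ := Real.pi_pos
  have hq0 : q ≠ 0 := by omega
  have hqR : (0:ℝ) < (q:ℝ) := by positivity
  set θ : ℝ := 2 * Real.pi / q with hθdef
  have hθ0 : 0 < θ := by positivity
  have hbdd : Bornology.IsBounded (C ∩ sector p x q) :=
    hC.1.isBounded.subset inter_subset_left
  set x' : ℂ := rot p θ x with hx'def
  have hx'C : x' ∈ C := by
    have := rot_dvd_mem hsym hkC0 hq hq0 1 hxC
    rw [← hθdef] at this
    rwa [show ((1:ℕ):ℝ) * θ = θ by push_cast; ring] at this
  have hx'sec : x' ∈ sector p x q := by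
    rw [hx'def, hθdef]
    exact rotx_mem_sector p x q

  have hxsec : x ∈ sector p x q := self_mem_sector p x q
  have hdist : dist x x' = 2 * dist p x * Real.sin (Real.pi / q) := by
    have hsub : x - x' = (1 - Complex.exp ((θ : ℂ) * Complex.I)) * (x - p) := by
      rw [hx'def, show rot p θ x = p + Complex.exp ((θ:ℂ) * Complex.I) * (x - p) from rfl]
      ring
    have hs2 : Real.sin (θ/2) ^ 2 = 2⁻¹ - Real.cos θ / 2 := by
      have h1 := Real.sin_sq_add_cos_sq (θ/2)
      have h2 := Real.cos_sq (θ/2)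
      rw [show 2 * (θ/2) = θ by ring] at h2
      linarith
    have hsin0 : 0 ≤ Real.sin (θ / 2) := by
      apply Real.sin_nonneg_of_nonneg_of_le_pi (by linarith)
      have hhalf : θ / 2 = Real.pi / q := by rw [hθdef]; ring
      rw [hhalf]
      exact div_le_self hπ.le (by exact_mod_cast (by omega : 1 ≤ q))
    have hEre : (Complex.exp ((θ:ℂ) * Complex.I)).re = Real.cos θ :=
      Complex.exp_ofReal_mul_I_re θ
    have hEim : (Complex.exp ((θ:ℂ) * Complex.I)).im = Real.sin θ :=
      Complex.exp_ofReal_mul_I_im θ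
    have hp2 := Real.sin_sq_add_cos_sq θ
    have hns : Complex.normSq (1 - Complex.exp ((θ:ℂ) * Complex.I))
        = (2 * Real.sin (θ/2))^2 := by
      simp only [Complex.normSq_apply, Complex.sub_re, Complex.sub_im, Complex.one_re,
        Complex.one_im, hEre, hEim]
      linear_combination hp2 - 4 * hs2
    have habs : ‖1 - Complex.exp ((θ : ℂ) * Complex.I)‖
        = 2 * Real.sin (θ/2) := by
      rw [Complex.norm_def, hns, Real.sqrt_sq (by linarith)]
    rw [Complex.dist_eq, hsub, norm_mul, habs, show θ/2 = Real.pi / q by rw [hθdef]; ring,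
      Complex.dist_eq, norm_sub_rev p x]
    ring
  rw [← hdist]
  exact dist_le_diam_of_mem hbdd ⟨hxC, hxsec⟩ ⟨hx'C, hx'sec⟩
set_option maxHeartbeats 1000000 in
/-- For a multi-rotationally symmetric planar convex body with composite
maximal degree `k_C` and minimal degree `minFac k_C ≥ 3`, the values
`d_M(P_a)` over all divisors `a > 1` of `k_C` all coincide iff every prime
dividing `k_C` is at least `7`. -/
theorem stmt_13 (C : Set ℂ) (p x : ℂ) (kC : ℕ) (hC : IsConvexBody C)
    (hk2 : 2 ≤ kC) (hcomp : ¬ kC.Prime) (hmin : 3 ≤ kC.minFac)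
    (hsym : IsRotSym C p kC) (hp : p ∈ interior C)
    (hx : x ∈ frontier C) (hxr : dist p x = infDist p (frontier C)) :
    (∀ a b : ℕ, a ∣ kC → b ∣ kC → 1 < a → 1 < b → dM C p x a = dM C p x b)
      ↔ ∀ q : ℕ, q.Prime → q ∣ kC → 7 ≤ q := by
  have hclosed : IsClosed C := hC.1.isClosed
  have hpC : p ∈ C := interior_subset hp
  have hxC : x ∈ C := hclosed.frontier_subset hx
  have hkC0 : kC ≠ 0 := by omega
  have hxint : x ∉ interior C := not_mem_interior_of_frontier hx
  have hpx : p ≠ x := by rintro rfl; exact hxint hp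
  have hxp : x ≠ p := hpx.symm
  have hr0 : 0 < dist p x := dist_pos.2 hpx
  set r : ℝ := dist p x with hrdef
  -- `kC` is at least 9
  have hminprime : (kC.minFac).Prime := Nat.minFac_prime (by omega)
  have hkC9 : 9 ≤ kC := by
    obtain ⟨m, hm⟩ := kC.minFac_dvd
    have hm1 : m ≠ 1 := by
      rintro rfl
      rw [mul_one] at hm
      exact hcomp (hm ▸ hminprime)
    have hm0 : m ≠ 0 := by rintro rfl; simp at hm; omega
    have h3m : 3 ≤ m := by
      have hmd : m ∣ kC := Dvd.intro_left _ hm.symm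
      have := Nat.minFac_le_of_dvd (by omega) hmd
      omega
    calc 9 = 3 * 3 := rfl
      _ ≤ kC.minFac * m := Nat.mul_le_mul hmin h3m
      _ = kC := hm.symm
  -- the farthest point from `p` in `C`
  obtain ⟨y0, hy0C, hy0max⟩ := hC.1.exists_isMaxOn ⟨p, hpC⟩
    ((continuous_const.dist continuous_id).continuousOn)
  set R : ℝ := dist p y0 with hRdef
  have hR : ∀ y ∈ C, dist p y ≤ R := fun y hy => isMaxOn_iff.1 hy0max y hy
  have hR0 : (0:ℝ) ≤ R := dist_nonneg
  -- circumradius bound from the supporting lines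
  have hRr : R * Real.cos (Real.pi / kC) ≤ r := by
    have h := abs_le_circ hC hk2 hsym hp hx hxr hy0C
    have hRabs : R = ‖y0 - p‖ := by
      rw [hRdef, Complex.dist_eq, norm_sub_rev]
    rw [hRabs]
    exact h
  -- `d_M` equals the circumradius for all divisors at least 6
  have hdM_eq : ∀ k : ℕ, k ∣ kC → 6 ≤ k → dM C p x k = R := by
    intro k hk hk6
    apply le_antisymm (dM_le_R hC hk6 hR0 hR)
    exact dist_le_dM hC hsym hkC0 hk (by omega) hpC hxp hy0C
  have hπ := Real.pi_pos
  constructor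
  · -- chain of equalities imposes big primes
    intro hchain q hqp hqd
    by_contra hq7
    push_neg at hq7
    have hq2 : 2 ≤ q := hqp.two_le
    have hqmin : kC.minFac ≤ q := Nat.minFac_le_of_dvd hq2 hqd
    have hq3 : 3 ≤ q := le_trans hmin hqmin
    have hq35 : q = 3 ∨ q = 5 := by
      interval_cases q
      · left; rfl
      · exact absurd hqp (by decide)
      · right; rfl
      · exact absurd hqp (by decide)
    have h1 : dM C p x q = dM C p x kC := hchain q kC hqd dvd_rfl (by omega) (by omega)
    have h2 : dM C p x kC = R := hdM_eq kC dvd_rfl (by omega)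
    have h3 : 2 * r * Real.sin (Real.pi / q) ≤ dM C p x q :=
      chord_le_dM hC hsym hkC0 hqd hq3 hxC
    have hRb : 2 * r * Real.sin (Real.pi / q) ≤ R := by
      rw [h1, h2] at h3; exact h3
    have hπgt : (3.141592 : ℝ) < Real.pi := Real.pi_gt_d6
    have hπlt : Real.pi < 3.141593 := Real.pi_lt_d6
    have hcos9 : Real.cos (Real.pi / 9) ≤ Real.cos (Real.pi / kC) := by
      apply Real.cos_le_cos_of_nonneg_of_le_pi (by positivity)
      · apply div_le_self hπ.le; norm_num
      · apply div_le_div_of_nonneg_left hπ.le (by norm_num)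
        exact_mod_cast hkC9
    have hcos9pos : (0.93 : ℝ) < Real.cos (Real.pi / 9) := by
      have hb := Real.one_sub_sq_div_two_le_cos (x := Real.pi / 9)
      nlinarith
    have hsin : (0.56 : ℝ) < Real.sin (Real.pi / q) := by
      rcases hq35 with rfl | rfl
      · rw [show ((3:ℕ):ℝ) = (3:ℝ) by norm_num, Real.sin_pi_div_three]
        have hs3 : Real.sqrt 3 ^ 2 = 3 := Real.sq_sqrt (by norm_num)
        have hs3' : (0:ℝ) ≤ Real.sqrt 3 := Real.sqrt_nonneg 3
        nlinarith
      · have h5 : Real.pi / 5 ≤ 1 := by linarith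
        have h5' : 0 < Real.pi / 5 := by positivity
        have hb := Real.sin_gt_sub_cube h5'
        rw [show ((5:ℕ):ℝ) = (5:ℝ) by norm_num]
        have hul : (0.6283:ℝ) < Real.pi / 5 := by linarith
        have huu : Real.pi / 5 < 0.6284 := by linarith
        have hsq : (Real.pi / 5) ^ 2 < 0.395 := by nlinarith
        have hcube : (Real.pi / 5) ^ 3 < 0.249 := by nlinarith
        linarith
    have hc9 : (0:ℝ) < Real.cos (Real.pi / 9) := by linarith
    have hfin : R * Real.cos (Real.pi / 9) ≤ r :=
      le_trans (mul_le_mul_of_nonneg_left hcos9 hR0) hRr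
    nlinarith [mul_le_mul_of_nonneg_right hRb hc9.le, hfin, hr0, hsin, hcos9pos,
      mul_pos hr0 hc9]
  · -- big primes give the chain of equalities
    intro hprime a b haD hbD ha1 hb1
    have h6 : ∀ c : ℕ, c ∣ kC → 1 < c → 6 ≤ c := by
      intro c hc hc1
      have hcp : (c.minFac).Prime := Nat.minFac_prime (by omega)
      have hcd : c.minFac ∣ kC := dvd_trans (Nat.minFac_dvd c) hc
      have h7 : 7 ≤ c.minFac := hprime _ hcp hcd
      have := Nat.minFac_le (by omega : 0 < c)
      omega
    rw [hdM_eq a haD (h6 a haD ha1), hdM_eq b hbD (h6 b hbD hb1)]
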